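/- In the exact category Nil(R;B₁,B₂), for an object x = (P₁,P₂,ρ₁,ρ₂) define x' = (P₁, B₂⊗P₁ ⊕ P₂, (0,ρ₁)ᵀ, (1, ρ₂)), x'' = (P₁, B₂⊗P₁, ρ₂∘ρ₁, 1), a = (0,P₂,0,0), a' = (0,B₂⊗P₁,0,0), with morphisms f : x → x', g : a → x', g' : x' → a', h : a → a', f' : x' → x'' as given by the matrices f=(1,(0,1)ᵀ), g=(0,(-ρ₂,1)ᵀ), g'=(0,(1,0)), h=(0,ρ₂), f'=(1,(1,ρ₂)). Then 0 → x ⊕ a → x' ⊕ a → a' → 0 (with maps ((f,g),(0,1)) and (g',h)) and 0 → a → x' → x'' → 0 (with maps g and f') are short exact sequences in Nil(R;B₁,B₂). -/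

import Mathlib

open TensorProduct

section NCT

variable (R : Type) [Ring R]

/-- The subgroup of relations defining the balanced tensor product `B ⊗_R P` of a
right `R`-module `B` and a left `R`-module `P` over a possibly noncommutative ring
`R`.  When `B` is an `(R,R)`-bimodule the relations are stable under the left
`R`-action, so they form an `R`-submodule of `B ⊗_ℤ P`. -/
def balancedSub (B P : Type) [AddCommGroup B] [AddCommGroup P]
    [Module R B] [Module Rᵐᵒᵖ B] [Module R P] :
    Submodule R (TensorProduct ℤ B P) :=
  Submodule.span R {z | ∃ (r : R) (b : B) (p : P),
    z = (MulOpposite.op r • b) ⊗ₜ[ℤ] p - b ⊗ₜ[ℤ] (r • p)}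

/-- The balanced tensor product `B ⊗_R P` over a possibly noncommutative ring `R`,
where `B` is an `(R,R)`-bimodule and `P` a left `R`-module.  It is a left
`R`-module via the left action on `B`. -/
abbrev NCT (B P : Type) [AddCommGroup B] [AddCommGroup P]
    [Module R B] [Module Rᵐᵒᵖ B] [Module R P] : Type :=
  TensorProduct ℤ B P ⧸ balancedSub R B P

/-- The image of `b ⊗ p` in the balanced tensor product `B ⊗_R P`. -/
noncomputable def NCT.mk {B P : Type} [AddCommGroup B] [AddCommGroup P]
    [Module R B] [Module Rᵐᵒᵖ B] [Module R P] (b : B) (p : P) : NCT R B P :=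
  Submodule.Quotient.mk (b ⊗ₜ[ℤ] p)

/-- Functoriality of the balanced tensor product: `1_B ⊗ f`. -/
noncomputable def NCT.lmap {B P Q : Type} [AddCommGroup B] [AddCommGroup P]
    [AddCommGroup Q] [Module R B] [Module Rᵐᵒᵖ B] [Module R P] [Module R Q]
    (f : P →ₗ[R] Q) : NCT R B P →ₗ[R] NCT R B Q := by
  refine Submodule.mapQ (balancedSub R B P) (balancedSub R B Q)
    (TensorProduct.AlgebraTensorModule.map (LinearMap.id : B →ₗ[R] B)
      (f.restrictScalars ℤ)) ?_
  rw [balancedSub, Submodule.span_le]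
  rintro z ⟨r, b, p, rfl⟩
  simp only [SetLike.mem_coe, Submodule.mem_comap, map_sub,
    TensorProduct.AlgebraTensorModule.map_tmul, LinearMap.id_coe, id_eq,
    LinearMap.coe_restrictScalars, map_smul]
  exact Submodule.subset_span ⟨r, b, f p, rfl⟩
  

variable (B₁ B₂ : Type) [AddCommGroup B₁] [AddCommGroup B₂]
  [Module R B₁] [Module Rᵐᵒᵖ B₁] [Module R B₂] [Module Rᵐᵒᵖ B₂]

/-- The iterated balanced tensor powers `(B₁ ⊗_R B₂)^{⊗k} ⊗_R P`, written in
nested form `B₁ ⊗ (B₂ ⊗ ( ⋯ ⊗ P))`. -/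
noncomputable def PairPow (P : Type) [AddCommGroup P] [Module R P] :
    ℕ → ModuleCat.{0} R :=
  fun k => Nat.rec (ModuleCat.of R P)
    (fun _ M => ModuleCat.of R (NCT R B₁ (NCT R B₂ M))) k

/-- The `k`-fold iterate `σᵏ : P → (B₁ ⊗_R B₂)^{⊗k} ⊗_R P` of a map
`σ : P → B₁ ⊗_R B₂ ⊗_R P`. -/
noncomputable def pairIter {P : Type} [AddCommGroup P] [Module R P]
    (σ : P →ₗ[R] NCT R B₁ (NCT R B₂ P)) :
    ∀ k : ℕ, P →ₗ[R] PairPow R B₁ B₂ P k :=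
  fun k => Nat.rec LinearMap.id
    (fun _ ih => ((NCT.lmap (B := B₁) R (NCT.lmap (B := B₂) R ih)).comp σ)) k

end NCT

section Nil16

variable (R : Type) [Ring R] (B₁ B₂ : Type) [AddCommGroup B₁] [AddCommGroup B₂]
  [Module R B₁] [Module Rᵐᵒᵖ B₁] [Module R B₂] [Module Rᵐᵒᵖ B₂]

/-- Nilpotency condition for an object `(P₁,P₂,ρ₁,ρ₂)` of `Nil(R;B₁,B₂)`:
the composite `ρ₂∘ρ₁` is nilpotent. -/
noncomputable def NilObj {P₁ P₂ : Type} [AddCommGroup P₁] [AddCommGroup P₂]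
    [Module R P₁] [Module R P₂]
    (ρ₁ : P₁ →ₗ[R] NCT R B₁ P₂) (ρ₂ : P₂ →ₗ[R] NCT R B₂ P₁) : Prop :=
  ∃ k : ℕ, pairIter R B₁ B₂ ((NCT.lmap (B := B₁) R ρ₂).comp ρ₁) k = 0

/-- A morphism `(f₁,f₂) : (P₁,P₂,ρ₁,ρ₂) → (Q₁,Q₂,σ₁,σ₂)` in `Nil(R;B₁,B₂)`:
a pair of `R`-module maps commuting with the structure maps. -/
def IsNilMor {P₁ P₂ Q₁ Q₂ : Type} [AddCommGroup P₁] [AddCommGroup P₂]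
    [AddCommGroup Q₁] [AddCommGroup Q₂]
    [Module R P₁] [Module R P₂] [Module R Q₁] [Module R Q₂]
    (ρ₁ : P₁ →ₗ[R] NCT R B₁ P₂) (ρ₂ : P₂ →ₗ[R] NCT R B₂ P₁)
    (σ₁ : Q₁ →ₗ[R] NCT R B₁ Q₂) (σ₂ : Q₂ →ₗ[R] NCT R B₂ Q₁)
    (f₁ : P₁ →ₗ[R] Q₁) (f₂ : P₂ →ₗ[R] Q₂) : Prop :=
  σ₁.comp f₁ = (NCT.lmap (B := B₁) R f₂).comp ρ₁ ∧
  σ₂.comp f₂ = (NCT.lmap (B := B₂) R f₁).comp ρ₂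

/-- The direct sum of two objects of `Nil(R;B₁,B₂)`: first structure map. -/
noncomputable def sumρ₁ {P₁ P₂ Q₁ Q₂ : Type} [AddCommGroup P₁] [AddCommGroup P₂]
    [AddCommGroup Q₁] [AddCommGroup Q₂]
    [Module R P₁] [Module R P₂] [Module R Q₁] [Module R Q₂]
    (ρ₁ : P₁ →ₗ[R] NCT R B₁ P₂) (σ₁ : Q₁ →ₗ[R] NCT R B₁ Q₂) :
    P₁ × Q₁ →ₗ[R] NCT R B₁ (P₂ × Q₂) :=
  LinearMap.coprod
    ((NCT.lmap (B := B₁) R (LinearMap.inl R P₂ Q₂)).comp ρ₁)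
    ((NCT.lmap (B := B₁) R (LinearMap.inr R P₂ Q₂)).comp σ₁)

/-- The direct sum of two objects of `Nil(R;B₁,B₂)`: second structure map. -/
noncomputable def sumρ₂ {P₁ P₂ Q₁ Q₂ : Type} [AddCommGroup P₁] [AddCommGroup P₂]
    [AddCommGroup Q₁] [AddCommGroup Q₂]
    [Module R P₁] [Module R P₂] [Module R Q₁] [Module R Q₂]
    (ρ₂ : P₂ →ₗ[R] NCT R B₂ P₁) (σ₂ : Q₂ →ₗ[R] NCT R B₂ Q₁) :
    P₂ × Q₂ →ₗ[R] NCT R B₂ (P₁ × Q₁) :=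
  LinearMap.coprod
    ((NCT.lmap (B := B₂) R (LinearMap.inl R P₁ Q₁)).comp ρ₂)
    ((NCT.lmap (B := B₂) R (LinearMap.inr R P₁ Q₁)).comp σ₂)

end Nil16

section NCTAux

variable {R : Type} [Ring R]
variable {B P Q S : Type} [AddCommGroup B] [AddCommGroup P] [AddCommGroup Q]
  [AddCommGroup S] [Module R B] [Module Rᵐᵒᵖ B] [Module R P] [Module R Q]
  [Module R S]

theorem NCT.lmap_mk (f : P →ₗ[R] Q) (b : B) (p : P) :
    NCT.lmap R f (NCT.mk R b p) = NCT.mk R b (f p) := by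
  simp [NCT.lmap, NCT.mk, Submodule.mapQ_apply]

theorem NCT.hom_ext {M : Type*} [AddCommGroup M] [Module R M]
    {f g : NCT R B P →ₗ[R] M}
    (h : ∀ (b : B) (p : P), f (NCT.mk R b p) = g (NCT.mk R b p)) : f = g := by
  apply LinearMap.ext; intro z
  obtain ⟨z, rfl⟩ := Submodule.Quotient.mk_surjective (balancedSub R B P) z
  induction z using TensorProduct.induction_on with
  | zero =>
      rw [show (Submodule.Quotient.mk (0 : TensorProduct ℤ B P) : NCT R B P) = 0
        from rfl, map_zero, map_zero]
  | tmul b p => exact h b p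
  | add x y hx hy =>
      rw [show (Submodule.Quotient.mk (x + y) : NCT R B P)
          = Submodule.Quotient.mk x + Submodule.Quotient.mk y from rfl,
        map_add, map_add, hx, hy]

theorem NCT.mk_zero (b : B) : NCT.mk R b (0 : P) = 0 := by
  simp [NCT.mk, TensorProduct.tmul_zero]

theorem NCT.lmap_comp (f : P →ₗ[R] Q) (g : Q →ₗ[R] S) :
    (NCT.lmap (B := B) R g).comp (NCT.lmap R f) = NCT.lmap R (g.comp f) :=
  NCT.hom_ext fun b p => by simp [NCT.lmap_mk]

theorem NCT.lmap_lmap (f : P →ₗ[R] Q) (g : Q →ₗ[R] S) (z : NCT R B P) :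
    NCT.lmap R g (NCT.lmap R f z) = NCT.lmap R (g.comp f) z :=
  LinearMap.congr_fun (NCT.lmap_comp f g) z

theorem NCT.lmap_id :
    NCT.lmap (B := B) R (LinearMap.id : P →ₗ[R] P) = LinearMap.id :=
  NCT.hom_ext fun b p => by simp [NCT.lmap_mk]

theorem NCT.lmap_zero :
    NCT.lmap (B := B) R (0 : P →ₗ[R] Q) = 0 :=
  NCT.hom_ext fun b p => by simp [NCT.lmap_mk, NCT.mk_zero]

end NCTAux
set_option maxHeartbeats 1000000 in
/-- For an object `x = (P₁,P₂,ρ₁,ρ₂)` of `Nil(R;B₁,B₂)`, with `X = B₂ ⊗_R P₁`,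
define `x' = (P₁, X ⊕ P₂, (0,ρ₁)ᵀ, (1,ρ₂))`, `x'' = (P₁, X, ρ₂∘ρ₁, 1)`,
`a = (0,P₂,0,0)`, `a' = (0,X,0,0)` and the morphisms `f = (1,(0,1)ᵀ) : x → x'`,
`g = (0,(-ρ₂,1)ᵀ) : a → x'`, `g' = (0,(1,0)) : x' → a'`, `h = (0,ρ₂) : a → a'`,
`f' = (1,(1,ρ₂)) : x' → x''`.  Then these are objects and morphisms of
`Nil(R;B₁,B₂)`, and `0 → x ⊕ a → x' ⊕ a → a' → 0` (with maps `((f,g),(0,1))` and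
`(g',h)`) and `0 → a → x' → x'' → 0` (with maps `g` and `f'`) are short exact
sequences in `Nil(R;B₁,B₂)` (exactness being componentwise). -/
theorem stmt16 (R : Type) [Ring R] (B₁ B₂ : Type) [AddCommGroup B₁] [AddCommGroup B₂]
    [Module R B₁] [Module Rᵐᵒᵖ B₁] [Module R B₂] [Module Rᵐᵒᵖ B₂]
    (P₁ P₂ : Type) [AddCommGroup P₁] [AddCommGroup P₂] [Module R P₁] [Module R P₂]
    (ρ₁ : P₁ →ₗ[R] NCT R B₁ P₂) (ρ₂ : P₂ →ₗ[R] NCT R B₂ P₁)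
    (hx : NilObj R B₁ B₂ ρ₁ ρ₂)
    -- the structure maps of x', x'', a, a'
    (ρ₁' : P₁ →ₗ[R] NCT R B₁ (NCT R B₂ P₁ × P₂))
    (ρ₂' : NCT R B₂ P₁ × P₂ →ₗ[R] NCT R B₂ P₁)
    (ρ₁'' : P₁ →ₗ[R] NCT R B₁ (NCT R B₂ P₁))
    (ρ₂'' : NCT R B₂ P₁ →ₗ[R] NCT R B₂ P₁)
    (aρ₁ : PUnit.{1} →ₗ[R] NCT R B₁ P₂) (aρ₂ : P₂ →ₗ[R] NCT R B₂ PUnit.{1})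
    (a'ρ₁ : PUnit.{1} →ₗ[R] NCT R B₁ (NCT R B₂ P₁))
    (a'ρ₂ : NCT R B₂ P₁ →ₗ[R] NCT R B₂ PUnit.{1})
    (h₁' : ρ₁' = (NCT.lmap (B := B₁) R (LinearMap.inr R (NCT R B₂ P₁) P₂)).comp ρ₁)
    (h₂' : ρ₂' = LinearMap.coprod LinearMap.id ρ₂)
    (h₁'' : ρ₁'' = (NCT.lmap (B := B₁) R ρ₂).comp ρ₁)
    (h₂'' : ρ₂'' = LinearMap.id)
    (ha₁ : aρ₁ = 0) (ha₂ : aρ₂ = 0) (ha'₁ : a'ρ₁ = 0) (ha'₂ : a'ρ₂ = 0) :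
    -- the new objects are objects of Nil(R;B₁,B₂)
    (NilObj R B₁ B₂ ρ₁' ρ₂' ∧ NilObj R B₁ B₂ ρ₁'' ρ₂'' ∧
      NilObj R B₁ B₂ aρ₁ aρ₂ ∧ NilObj R B₁ B₂ a'ρ₁ a'ρ₂) ∧
    -- f, g, g', h, f' are morphisms in Nil(R;B₁,B₂)
    (IsNilMor R B₁ B₂ ρ₁ ρ₂ ρ₁' ρ₂'
        LinearMap.id (LinearMap.inr R (NCT R B₂ P₁) P₂) ∧
      IsNilMor R B₁ B₂ aρ₁ aρ₂ ρ₁' ρ₂'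
        0 (LinearMap.prod (-ρ₂) LinearMap.id) ∧
      IsNilMor R B₁ B₂ ρ₁' ρ₂' a'ρ₁ a'ρ₂
        0 (LinearMap.fst R (NCT R B₂ P₁) P₂) ∧
      IsNilMor R B₁ B₂ aρ₁ aρ₂ a'ρ₁ a'ρ₂ 0 ρ₂ ∧
      IsNilMor R B₁ B₂ ρ₁' ρ₂' ρ₁'' ρ₂''
        LinearMap.id (LinearMap.coprod LinearMap.id ρ₂)) ∧
    -- the sequence 0 → x ⊕ a → x' ⊕ a → a' → 0 is short exact (componentwise)
    (IsNilMor R B₁ B₂ (sumρ₁ R B₁ ρ₁ aρ₁) (sumρ₂ R B₂ ρ₂ aρ₂)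
        (sumρ₁ R B₁ ρ₁' aρ₁) (sumρ₂ R B₂ ρ₂' aρ₂)
        (LinearMap.prod (LinearMap.coprod LinearMap.id 0)
          (LinearMap.snd R P₁ PUnit.{1}))
        (LinearMap.prod
          (LinearMap.coprod (LinearMap.inr R (NCT R B₂ P₁) P₂)
            (LinearMap.prod (-ρ₂) LinearMap.id))
          (LinearMap.snd R P₂ P₂)) ∧
      IsNilMor R B₁ B₂ (sumρ₁ R B₁ ρ₁' aρ₁) (sumρ₂ R B₂ ρ₂' aρ₂)
        a'ρ₁ a'ρ₂
        (0 : P₁ × PUnit.{1} →ₗ[R] PUnit.{1})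
        (LinearMap.coprod (LinearMap.fst R (NCT R B₂ P₁) P₂) ρ₂) ∧
      Function.Injective
        (LinearMap.prod (LinearMap.coprod LinearMap.id 0)
          (LinearMap.snd R P₁ PUnit.{1})) ∧
      Function.Injective
        (LinearMap.prod
          (LinearMap.coprod (LinearMap.inr R (NCT R B₂ P₁) P₂)
            (LinearMap.prod (-ρ₂) LinearMap.id))
          (LinearMap.snd R P₂ P₂)) ∧
      Function.Exact
        (LinearMap.prod (LinearMap.coprod LinearMap.id 0)
          (LinearMap.snd R P₁ PUnit.{1}))
        (0 : P₁ × PUnit.{1} →ₗ[R] PUnit.{1}) ∧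
      Function.Exact
        (LinearMap.prod
          (LinearMap.coprod (LinearMap.inr R (NCT R B₂ P₁) P₂)
            (LinearMap.prod (-ρ₂) LinearMap.id))
          (LinearMap.snd R P₂ P₂))
        (LinearMap.coprod (LinearMap.fst R (NCT R B₂ P₁) P₂) ρ₂) ∧
      Function.Surjective (0 : P₁ × PUnit.{1} →ₗ[R] PUnit.{1}) ∧
      Function.Surjective
        (LinearMap.coprod (LinearMap.fst R (NCT R B₂ P₁) P₂) ρ₂)) ∧
    -- the sequence 0 → a → x' → x'' → 0 is short exact (componentwise)
    (Function.Injective (0 : PUnit.{1} →ₗ[R] P₁) ∧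
      Function.Injective (LinearMap.prod (-ρ₂) (LinearMap.id : P₂ →ₗ[R] P₂)) ∧
      Function.Exact (0 : PUnit.{1} →ₗ[R] P₁) (LinearMap.id : P₁ →ₗ[R] P₁) ∧
      Function.Exact (LinearMap.prod (-ρ₂) (LinearMap.id : P₂ →ₗ[R] P₂))
        (LinearMap.coprod LinearMap.id ρ₂) ∧
      Function.Surjective (LinearMap.id : P₁ →ₗ[R] P₁) ∧
      Function.Surjective (LinearMap.coprod (LinearMap.id : NCT R B₂ P₁ →ₗ[R] _) ρ₂)) := by
  subst h₁' h₂' h₁'' h₂'' ha₁ ha₂ ha'₁ ha'₂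
  have keyx' : (NCT.lmap (B := B₁) R (LinearMap.coprod LinearMap.id ρ₂)).comp
      ((NCT.lmap (B := B₁) R (LinearMap.inr R (NCT R B₂ P₁) P₂)).comp ρ₁)
      = (NCT.lmap (B := B₁) R ρ₂).comp ρ₁ := by
    rw [← LinearMap.comp_assoc, NCT.lmap_comp,
      show (LinearMap.coprod (LinearMap.id) ρ₂).comp
        (LinearMap.inr R (NCT R B₂ P₁) P₂) = ρ₂ from by
          apply LinearMap.ext; intro q; simp]
  refine ⟨⟨?_, ?_, ?_, ?_⟩, ⟨?_, ?_, ?_, ?_, ?_⟩,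
    ⟨?_, ?_, ?_, ?_, ?_, ?_, ?_, ?_⟩, ⟨?_, ?_, ?_, ?_, ?_, ?_⟩⟩
  · -- NilObj x'
    obtain ⟨k, hk⟩ := hx
    exact ⟨k, by rwa [keyx']⟩
  · -- NilObj x''
    obtain ⟨k, hk⟩ := hx
    refine ⟨k, ?_⟩
    rwa [NCT.lmap_id, LinearMap.id_comp]
  · -- NilObj a
    exact ⟨0, LinearMap.ext fun x => by rw [Subsingleton.elim x 0, map_zero, map_zero]⟩
  · -- NilObj a'
    exact ⟨0, LinearMap.ext fun x => by rw [Subsingleton.elim x 0, map_zero, map_zero]⟩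
  · -- f : x → x'
    refine ⟨by rw [LinearMap.comp_id], ?_⟩
    rw [NCT.lmap_id, LinearMap.id_comp]
    apply LinearMap.ext; intro p; simp
  · -- g : a → x'
    refine ⟨by rw [LinearMap.comp_zero, LinearMap.comp_zero], ?_⟩
    rw [NCT.lmap_zero, LinearMap.zero_comp]
    apply LinearMap.ext; intro p; simp
  · -- g' : x' → a'
    constructor
    · rw [LinearMap.zero_comp, ← LinearMap.comp_assoc, NCT.lmap_comp,
        show (LinearMap.fst R (NCT R B₂ P₁) P₂).comp
          (LinearMap.inr R (NCT R B₂ P₁) P₂) = 0 from by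
            apply LinearMap.ext; intro q; simp,
        NCT.lmap_zero, LinearMap.zero_comp]
    · rw [LinearMap.zero_comp, NCT.lmap_zero, LinearMap.zero_comp]
  · -- h : a → a'
    exact ⟨by rw [LinearMap.zero_comp, LinearMap.comp_zero],
      by rw [LinearMap.zero_comp, LinearMap.comp_zero]⟩
  · -- f' : x' → x''
    constructor
    · rw [LinearMap.comp_id, ← LinearMap.comp_assoc, NCT.lmap_comp,
        show (LinearMap.coprod (LinearMap.id) ρ₂).comp
          (LinearMap.inr R (NCT R B₂ P₁) P₂) = ρ₂ from by
            apply LinearMap.ext; intro q; simp]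
    · rw [NCT.lmap_id]
  · -- sum morphism (f,g)⊕(0,1)
    constructor
    · apply LinearMap.ext; rintro ⟨p, u⟩
      simp only [sumρ₁, LinearMap.coe_comp, Function.comp_apply,
        LinearMap.prod_apply, LinearMap.coprod_apply, LinearMap.snd_apply,
        LinearMap.id_coe, id_eq, LinearMap.zero_apply, LinearMap.comp_apply,
        Function.prod, map_zero, add_zero, NCT.lmap_lmap]
      rw [show (LinearMap.inl R (NCT R B₂ P₁ × P₂) P₂).comp
          (LinearMap.inr R (NCT R B₂ P₁) P₂)
          = (((LinearMap.inr R (NCT R B₂ P₁) P₂).coprod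
              ((-ρ₂).prod LinearMap.id)).prod (LinearMap.snd R P₂ P₂)).comp
            (LinearMap.inl R P₂ P₂) from by
          apply LinearMap.ext; intro q; simp [Prod.ext_iff]]
    · apply LinearMap.ext; rintro ⟨p, q⟩
      simp only [sumρ₂, LinearMap.coe_comp, Function.comp_apply,
        LinearMap.prod_apply, LinearMap.coprod_apply, LinearMap.snd_apply,
        LinearMap.id_coe, id_eq, LinearMap.zero_apply, LinearMap.comp_apply,
        Function.prod, map_zero, add_zero, map_add, map_neg, NCT.lmap_lmap,
        LinearMap.inr_apply, LinearMap.neg_apply]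
      rw [show (LinearMap.prod (LinearMap.coprod LinearMap.id 0)
          (LinearMap.snd R P₁ PUnit.{1})).comp (LinearMap.inl R P₁ PUnit.{1})
          = LinearMap.inl R P₁ PUnit.{1} from by
            apply LinearMap.ext; intro q; simp]
      abel
  · -- sum morphism (g',h)
    constructor
    · apply LinearMap.ext; rintro ⟨p, u⟩
      simp only [sumρ₁, LinearMap.coe_comp, Function.comp_apply,
        LinearMap.prod_apply, LinearMap.coprod_apply, LinearMap.snd_apply,
        LinearMap.id_coe, id_eq, LinearMap.zero_apply, LinearMap.comp_apply,
        Function.prod, map_zero, add_zero, NCT.lmap_lmap]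
      rw [show (LinearMap.coprod (LinearMap.fst R (NCT R B₂ P₁) P₂) ρ₂).comp
          ((LinearMap.inl R (NCT R B₂ P₁ × P₂) P₂).comp
            (LinearMap.inr R (NCT R B₂ P₁) P₂)) = 0 from by
            apply LinearMap.ext; intro q; simp,
        NCT.lmap_zero]
      simp
    · rw [LinearMap.zero_comp, NCT.lmap_zero, LinearMap.zero_comp]
  · -- injectivity of first map, first component
    rintro ⟨p, u⟩ ⟨p', u'⟩ h
    simp only [LinearMap.prod_apply, Function.prod, LinearMap.coprod_apply,
      LinearMap.id_coe, id_eq, LinearMap.zero_apply, add_zero,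
      LinearMap.snd_apply, Prod.mk.injEq] at h
    exact Prod.ext h.1 (Subsingleton.elim _ _)
  · -- injectivity of first map, second component
    rintro ⟨p, q⟩ ⟨p', q'⟩ h
    have h2 := congrArg (fun y : (NCT R B₂ P₁ × P₂) × P₂ => (y.1.2 - y.2, y.2)) h
    simpa using h2
  · -- exactness at first component
    intro y
    constructor
    · intro _
      exact ⟨y, by apply Prod.ext <;> simp⟩
    · intro _
      trivial
  · -- exactness at second component
    intro y
    constructor
    · intro h
      have hx : y.1.1 = -ρ₂ y.2 := by
        rw [eq_neg_iff_add_eq_zero]; simpa using h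
      refine ⟨(y.1.2 - y.2, y.2), ?_⟩
      apply Prod.ext
      · apply Prod.ext <;> simp [hx]
      · rfl
    · rintro ⟨⟨p', q'⟩, rfl⟩
      simp
  · -- surjectivity onto PUnit
    intro u
    exact ⟨0, Subsingleton.elim _ _⟩
  · -- surjectivity of coprod fst ρ₂
    intro x
    exact ⟨((x, 0), 0), by simp⟩
  · -- injectivity of 0 : PUnit → P₁
    intro a b _
    exact Subsingleton.elim a b
  · -- injectivity of prod (-ρ₂) id
    intro p q h
    simpa using congrArg Prod.snd h
  · -- exactness PUnit → P₁ → P₁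
    intro y
    constructor
    · intro h
      exact ⟨PUnit.unit, by simpa using h.symm⟩
    · rintro ⟨x, hx⟩
      simpa using hx.symm
  · -- exactness P₂ → X × P₂ → X
    intro y
    constructor
    · intro h
      have hx : y.1 = -ρ₂ y.2 := by
        rw [eq_neg_iff_add_eq_zero]; simpa using h
      refine ⟨y.2, ?_⟩
      apply Prod.ext <;> simp [hx]
    · rintro ⟨q, rfl⟩
      simp
  · -- surjectivity of id
    exact fun y => ⟨y, rfl⟩
  · -- surjectivity of coprod id ρ₂
    intro x
    exact ⟨(x, 0), by simp⟩
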